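/- For s > 0 and integer L ≥ 3, the ODE dū/dt = ū^{L−1}(s − ū^L), ū(0) = β with 0 < β^L < s, satisfies the implicit relation t = (1/(s(2−L))) [ū^{2−L}(t) · ₂F₁(1, 2/L − 1, 2/L; ū^L(t)/s) − β^{2−L} · ₂F₁(1, 2/L − 1, 2/L; β^L/s)], where ₂F₁ is the Gauss hypergeometric function. -/

import Mathlib

/-- Gauss hypergeometric function ₂F₁(a,b,c;x) = Σ_k (a)_k (b)_k / (c)_k · x^k / k!. -/
noncomputable def twoF1 (a b c x : ℝ) : ℝ :=
  ∑' k : ℕ, ((ascPochhammer ℝ k).eval a * (ascPochhammer ℝ k).eval b /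
    (ascPochhammer ℝ k).eval c) * x ^ k / (Nat.factorial k)

open Real Set Filter Topology

/-- series term for the antiderivative -/
noncomputable def Gser (L : ℕ) (s x : ℝ) (k : ℕ) : ℝ :=
  x ^ ((L : ℝ) * k + 2 - L) / (s ^ (k + 1) * ((L : ℝ) * k + 2 - L))

noncomputable def Gfun (L : ℕ) (s x : ℝ) : ℝ := ∑' k, Gser L s x k

lemma poch_ratio (c : ℝ) : ∀ k : ℕ,
    (ascPochhammer ℝ k).eval (c - 1) * (c - 1 + k) = (ascPochhammer ℝ k).eval c * (c - 1)
  | 0 => by simp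
  | (k + 1) => by
    rw [ascPochhammer_succ_eval, ascPochhammer_succ_eval]
    push_cast
    linear_combination ((c : ℝ) + k) * poch_ratio c k

lemma twoF1_eval (c y : ℝ) (hc : 0 < c) (hc1 : c < 1) :
    twoF1 1 (c - 1) c y = ∑' k : ℕ, ((c - 1) / (c - 1 + k)) * y ^ k := by
  unfold twoF1
  refine tsum_congr fun k => ?_
  have h1 : (ascPochhammer ℝ k).eval 1 = ((k).factorial : ℝ) := by
    rw [ascPochhammer_eval_one]
  have hck : (0 : ℝ) < (ascPochhammer ℝ k).eval c := ascPochhammer_pos k c hc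
  have hden : c - 1 + (k : ℝ) ≠ 0 := by
    rcases k with _ | k
    · simpa using sub_ne_zero.mpr hc1.ne
    · push_cast; nlinarith
  have hfac : ((k).factorial : ℝ) ≠ 0 := by positivity
  have key := poch_ratio c k
  rw [h1]
  field_simp
  linear_combination (y ^ k) * key
section part2
variable {L : ℕ} {s x : ℝ}

lemma alpha_abs (hL : 3 ≤ L) (k : ℕ) : (1 : ℝ) ≤ |(L : ℝ) * k + 2 - L| := by
  have hL3 : (3 : ℝ) ≤ L := by exact_mod_cast hL
  rcases k with _ | k
  · rw [abs_of_nonpos (by push_cast; linarith)]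
    push_cast; linarith
  · rw [abs_of_nonneg (by push_cast; nlinarith [Nat.cast_nonneg (α := ℝ) k])]
    push_cast
    nlinarith [Nat.cast_nonneg (α := ℝ) k]

lemma alpha_ne (hL : 3 ≤ L) (k : ℕ) : ((L : ℝ) * k + 2 - L) ≠ 0 := by
  intro h
  have := alpha_abs hL k
  rw [h] at this; simp at this; linarith

lemma Gfun_eq (hL : 3 ≤ L) (hs : 0 < s) (hx : 0 < x) :
    (1 / (s * (2 - (L : ℝ)))) * (x ^ ((2 : ℝ) - L) * twoF1 1 (2 / L - 1) (2 / L) (x ^ L / s))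
      = Gfun L s x := by
  have hL0 : (0 : ℝ) < L := by positivity
  have hLne : (L : ℝ) ≠ 0 := hL0.ne'
  have hc : (0 : ℝ) < 2 / L := by positivity
  have hc1 : (2 : ℝ) / L < 1 := by
    rw [div_lt_one hL0]; exact_mod_cast by omega
  have h2L : (2 : ℝ) - L ≠ 0 := by
    have : (3 : ℝ) ≤ L := by exact_mod_cast hL
    linarith
  rw [twoF1_eval _ _ hc hc1, ← tsum_mul_left, ← tsum_mul_left]
  unfold Gfun Gser
  refine tsum_congr fun k => ?_
  have hα := alpha_ne hL k
  have hden : 2 / (L : ℝ) - 1 + k = ((L : ℝ) * k + 2 - L) / L := by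
    field_simp; ring
  have hxp : x ^ ((L : ℝ) * k + 2 - L) = x ^ ((2 : ℝ) - L) * (x ^ L) ^ k := by
    rw [← pow_mul, ← Real.rpow_natCast x (L * k), ← Real.rpow_add hx]
    congr 1
    push_cast; ring
  rw [hden, hxp, div_pow]
  have hxLk : (0 : ℝ) < (x ^ L) ^ k := by positivity
  field_simp
  ring
end part2
section part3
variable {L : ℕ} {s x : ℝ}

lemma root_pow (hL : 3 ≤ L) (hs : 0 < s) : (s ^ (1 / (L : ℝ))) ^ L = s := by
  have hLne : (L : ℝ) ≠ 0 := by positivity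
  rw [← Real.rpow_natCast (s ^ (1 / (L : ℝ))) L, ← Real.rpow_mul hs.le,
    one_div_mul_cancel hLne, Real.rpow_one]

lemma lt_root (hL : 3 ≤ L) (hs : 0 < s) (hx : 0 ≤ x) (hxs : x ^ L < s) :
    x < s ^ (1 / (L : ℝ)) := by
  have hr : 0 < s ^ (1 / (L : ℝ)) := Real.rpow_pos_of_pos hs _
  have := root_pow hL hs
  by_contra h
  push_neg at h
  have : s ≤ x ^ L := by
    calc s = (s ^ (1 / (L : ℝ))) ^ L := (root_pow hL hs).symm
    _ ≤ x ^ L := pow_le_pow_left₀ hr.le h L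
  linarith

lemma root_lt (hL : 3 ≤ L) (hs : 0 < s) (hx : 0 ≤ x) (hxr : x < s ^ (1 / (L : ℝ))) :
    x ^ L < s := by
  calc x ^ L < (s ^ (1 / (L : ℝ))) ^ L := pow_lt_pow_left₀ hxr hx (by omega)
  _ = s := root_pow hL hs

lemma hasDerivAt_Gfun (hL : 3 ≤ L) (hs : 0 < s) (hx : 0 < x) (hxs : x ^ L < s) :
    HasDerivAt (Gfun L s) ((x ^ (L - 1) * (s - x ^ L))⁻¹) x := by
  have hLR : (3 : ℝ) ≤ L := by exact_mod_cast hL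
  -- choose an interval
  set r : ℝ := s ^ (1 / (L : ℝ)) with hr_def
  have hxr : x < r := lt_root hL hs hx.le hxs
  set r' : ℝ := (x + r) / 2 with hr'_def
  have hr'0 : 0 < r' := by positivity
  have hxr' : x < r' := by simp only [hr'_def]; linarith
  have hr'r : r' < r := by simp only [hr'_def]; linarith
  have hr's : r' ^ L < s := root_lt hL hs hr'0.le hr'r
  have hq : r' ^ L / s < 1 := (div_lt_one hs).mpr hr's
  have hq0 : 0 ≤ r' ^ L / s := by positivity
  set T : Set ℝ := Set.Ioo (x / 2) r' with hT_def
  have hxT : x ∈ T := ⟨by linarith, hxr'⟩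
  set u : ℕ → ℝ := fun k => (x / 2) ^ ((1 : ℝ) - L) * (r' ^ L / s) ^ k / s with hu_def
  have hu : Summable u := by
    apply Summable.div_const
    exact (summable_geometric_of_lt_one hq0 hq).mul_left _
  set g' : ℕ → ℝ → ℝ := fun k y => y ^ ((L : ℝ) * k + 1 - L) / s ^ (k + 1) with hg'_def
  have hsplit : ∀ (y : ℝ), 0 < y → ∀ k : ℕ,
      y ^ ((L : ℝ) * k + 1 - L) = y ^ ((1 : ℝ) - L) * y ^ (L * k) := by
    intro y hy k
    rw [← Real.rpow_natCast y (L * k), ← Real.rpow_add hy]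
    congr 1
    push_cast; ring
  have hg : ∀ (k : ℕ) (y : ℝ), y ∈ T → HasDerivAt (fun z => Gser L s z k) (g' k y) y := by
    intro k y hy
    have hy0 : 0 < y := lt_trans (by positivity) hy.1
    have hα := alpha_ne hL k
    have hkey := (Real.hasDerivAt_rpow_const
      (x := y) (p := (L : ℝ) * k + 2 - L) (Or.inl hy0.ne')).div_const
      (s ^ (k + 1) * ((L : ℝ) * k + 2 - L))
    refine hkey.congr_deriv ?_
    simp only [hg'_def]
    rw [show (L : ℝ) * k + 2 - L - 1 = (L : ℝ) * k + 1 - L by ring]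
    field_simp
  have hg'le : ∀ (k : ℕ) (y : ℝ), y ∈ T → ‖g' k y‖ ≤ u k := by
    intro k y hy
    have hy0 : 0 < y := lt_trans (by positivity) hy.1
    have h1 : y ^ ((1 : ℝ) - L) ≤ (x / 2) ^ ((1 : ℝ) - L) :=
      Real.rpow_le_rpow_of_nonpos (by positivity) hy.1.le (by linarith)
    have h2 : y ^ (L * k) ≤ (r' ^ L) ^ k := by
      rw [← pow_mul]
      exact pow_le_pow_left₀ hy0.le hy.2.le _
    rw [hg'_def]
    simp only [Real.norm_eq_abs]
    rw [abs_of_nonneg (by positivity)]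
    rw [hsplit y hy0 k]
    have hrhs : u k = (x / 2) ^ ((1:ℝ) - L) * (r' ^ L) ^ k / s ^ (k + 1) := by
      simp only [hu_def, div_pow, pow_succ]
      field_simp
      try ring
    rw [hrhs]
    gcongr
    all_goals first | exact h1 | exact h2
  have hg0 : Summable (fun k => Gser L s x k) := by
    apply Summable.of_norm_bounded (g := fun k => x ^ ((2 : ℝ) - L) * (x ^ L / s) ^ k / s)
    · apply Summable.div_const
      exact (summable_geometric_of_lt_one (by positivity) ((div_lt_one hs).mpr hxs)).mul_left _
    · intro k
      have hα := alpha_abs hL k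
      have hα0 := alpha_ne hL k
      unfold Gser
      rw [Real.norm_eq_abs, abs_div, abs_of_nonneg (by positivity : (0:ℝ) ≤ x ^ ((L : ℝ) * k + 2 - L)),
        abs_mul, abs_of_nonneg (by positivity : (0:ℝ) ≤ s ^ (k+1))]
      have hexp : x ^ ((L : ℝ) * k + 2 - L) = x ^ ((2 : ℝ) - L) * x ^ (L * k) := by
        rw [← Real.rpow_natCast x (L * k), ← Real.rpow_add hx]
        congr 1; push_cast; ring
      rw [hexp]
      have hrhs : x ^ ((2:ℝ) - L) * (x ^ L / s) ^ k / s
          = x ^ ((2:ℝ) - L) * x ^ (L * k) / s ^ (k + 1) := by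
        rw [div_pow, ← pow_mul, pow_succ]
        field_simp
        try ring
      rw [hrhs]
      gcongr
      exact le_mul_of_one_le_right (by positivity) hα
  have hkey := hasDerivAt_tsum_of_isPreconnected hu isOpen_Ioo
    (convex_Ioo _ _).isPreconnected hg hg'le hxT hg0 hxT
  have hsum : (∑' k, g' k x) = (x ^ (L - 1) * (s - x ^ L))⁻¹ := by
    have h1 : ∀ k : ℕ, g' k x = (x ^ ((1:ℝ) - L) / s) * (x ^ L / s) ^ k := by
      intro k
      rw [hg'_def]
      simp only
      rw [hsplit x hx k, div_pow, ← pow_mul, pow_succ]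
      field_simp
    rw [tsum_congr h1, tsum_mul_left,
      tsum_geometric_of_lt_one (by positivity) ((div_lt_one hs).mpr hxs)]
    have hx1L : x ^ ((1:ℝ) - L) = (x ^ (L - 1))⁻¹ := by
      have hc : ((L - 1 : ℕ) : ℝ) = (L : ℝ) - 1 := by
        rw [Nat.cast_sub (by omega)]; simp
      rw [show (1:ℝ) - L = -(((L - 1 : ℕ) : ℝ)) by rw [hc]; ring,
        Real.rpow_neg hx.le, Real.rpow_natCast]
    rw [hx1L]
    have hxL1 : (0:ℝ) < x ^ (L - 1) := by positivity
    have hsx : (0:ℝ) < s - x ^ L := by linarith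
    have h1x : (1:ℝ) - x ^ L / s ≠ 0 := by
      have : x ^ L / s < 1 := (div_lt_one hs).mpr hxs
      intro h; rw [sub_eq_zero] at h; rw [← h] at this; simp at this
    field_simp
  rwa [hsum] at hkey
end part3
section part4

lemma ode_lipschitz (L : ℕ) (hL : 3 ≤ L) (s ρ : ℝ) (hs : 0 < s) (hρ : 0 < ρ) :
    ∃ K : NNReal, LipschitzOnWith K (fun x : ℝ => x ^ (L - 1) * (s - x ^ L)) (Set.Icc 0 ρ) := by
  set C : ℝ := (L : ℝ) * ρ ^ (L - 1 - 1) * (s + ρ ^ L) + ρ ^ (L - 1) * ((L : ℝ) * ρ ^ (L - 1)) + 1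
    with hC
  refine ⟨⟨C, by positivity⟩, ?_⟩
  apply Convex.lipschitzOnWith_of_nnnorm_hasDerivWithin_le (convex_Icc 0 ρ)
    (f' := fun y => ((L - 1 : ℕ) : ℝ) * y ^ (L - 1 - 1) * (s - y ^ L)
      + y ^ (L - 1) * (0 - (L : ℝ) * y ^ (L - 1)))
  · intro y _
    exact ((hasDerivAt_pow (L - 1) y).mul
      ((hasDerivAt_const y s).sub (hasDerivAt_pow L y))).hasDerivWithinAt
  · intro y hy
    apply NNReal.coe_le_coe.mp
    simp only [coe_nnnorm, Real.norm_eq_abs, NNReal.coe_mk]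
    have hy0 : 0 ≤ y := hy.1
    have hyρ : y ≤ ρ := hy.2
    have e1 : |((L - 1 : ℕ) : ℝ)| ≤ (L : ℝ) := by
      rw [abs_of_nonneg (by positivity)]
      exact_mod_cast Nat.sub_le L 1
    have e2 : |y ^ (L - 1 - 1)| ≤ ρ ^ (L - 1 - 1) := by
      rw [abs_of_nonneg (by positivity)]
      exact pow_le_pow_left₀ hy0 hyρ _
    have e3 : |s - y ^ L| ≤ s + ρ ^ L := by
      rw [abs_le]
      constructor
      · nlinarith [pow_nonneg hy0 L, pow_le_pow_left₀ hy0 hyρ L]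
      · nlinarith [pow_nonneg hy0 L, pow_nonneg hρ.le L]
    have e4 : |y ^ (L - 1)| ≤ ρ ^ (L - 1) := by
      rw [abs_of_nonneg (by positivity)]
      exact pow_le_pow_left₀ hy0 hyρ _
    have e5 : |0 - (L : ℝ) * y ^ (L - 1)| ≤ (L : ℝ) * ρ ^ (L - 1) := by
      rw [zero_sub, abs_neg, abs_mul, abs_of_nonneg (by positivity : (0:ℝ) ≤ (L:ℝ))]
      apply mul_le_mul_of_nonneg_left _ (by positivity)
      rw [abs_of_nonneg (by positivity)]
      exact pow_le_pow_left₀ hy0 hyρ _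
    have h1 : |((L - 1 : ℕ) : ℝ) * y ^ (L - 1 - 1) * (s - y ^ L)|
        ≤ (L : ℝ) * ρ ^ (L - 1 - 1) * (s + ρ ^ L) := by
      rw [abs_mul, abs_mul]
      exact mul_le_mul (mul_le_mul e1 e2 (abs_nonneg _) (by positivity)) e3 (abs_nonneg _)
        (by positivity)
    have h2 : |y ^ (L - 1) * (0 - (L : ℝ) * y ^ (L - 1))|
        ≤ ρ ^ (L - 1) * ((L : ℝ) * ρ ^ (L - 1)) := by
      rw [abs_mul]
      exact mul_le_mul e4 e5 (abs_nonneg _) (by positivity)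
    have h3 := abs_add_le (((L - 1 : ℕ) : ℝ) * y ^ (L - 1 - 1) * (s - y ^ L))
      (y ^ (L - 1) * (0 - (L : ℝ) * y ^ (L - 1)))
    show _ ≤ C
    rw [hC]
    linarith

lemma invariance (L : ℕ) (hL : 3 ≤ L) (s b : ℝ) (hs : 0 < s) (hb : 0 < b) (hbs : b ^ L < s)
    (u : ℝ → ℝ) (hu0 : u 0 = b)
    (hode : ∀ t : ℝ, 0 ≤ t → HasDerivAt u (u t ^ (L - 1) * (s - u t ^ L)) t) :
    ∀ t : ℝ, 0 ≤ t → 0 < u t ∧ u t ^ L < s := by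
  set r : ℝ := s ^ (1 / (L : ℝ)) with hr_def
  have hr0 : 0 < r := Real.rpow_pos_of_pos hs _
  have hrL : r ^ L = s := root_pow hL hs
  have hbr : b < r := lt_root hL hs hb.le hbs
  have ucont : ∀ t : ℝ, 0 ≤ t → ContinuousAt u t := fun t ht => (hode t ht).continuousAt
  by_contra hcon
  push_neg at hcon
  obtain ⟨t₁, ht₁, hbad₁⟩ := hcon
  -- the bad set
  set B : Set ℝ := {t | 0 ≤ t ∧ (u t ≤ 0 ∨ r ≤ u t)} with hB_def
  have hBne : B.Nonempty := by
    refine ⟨t₁, ht₁, ?_⟩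
    by_contra h
    push_neg at h
    exact absurd (hbad₁ h.1) (not_le.mpr (root_lt hL hs h.1.le h.2))
  have hBbdd : BddBelow B := ⟨0, fun t ht => ht.1⟩
  set T : ℝ := sInf B with hT_def
  have hT0 : 0 ≤ T := le_csInf hBne fun t ht => ht.1
  have hTB : T ∈ B := by
    obtain ⟨seq, -, hseqT, hseqB⟩ := exists_seq_tendsto_sInf hBne hBbdd
    have huseq : Filter.Tendsto (fun n => u (seq n)) Filter.atTop (nhds (u T)) :=
      ((ucont T hT0).tendsto.comp hseqT)
    constructor
    · exact hT0
    · have hclosed : IsClosed {y : ℝ | y ≤ 0 ∨ r ≤ y} := isClosed_Iic.union isClosed_Ici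
      exact hclosed.mem_of_tendsto huseq (Filter.Eventually.of_forall fun n => (hseqB n).2)
  have hTpos : 0 < T := by
    rcases hT0.lt_or_eq with h | h
    · exact h
    · exfalso
      rw [← h] at hTB
      rcases hTB.2 with h' | h' <;> rw [hu0] at h' <;> linarith
  have hgood : ∀ τ : ℝ, 0 ≤ τ → τ < T → 0 < u τ ∧ u τ < r := by
    intro τ hτ0 hτT
    by_contra h
    push_neg at h
    have : τ ∈ B := by
      refine ⟨hτ0, ?_⟩
      rcases lt_or_ge 0 (u τ) with h1 | h1
      · exact Or.inr (h h1)
      · exact Or.inl h1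
    exact absurd (csInf_le hBbdd this) (not_le.mpr hτT)
  have hUT : u T ∈ Set.Icc (0 : ℝ) r := by
    have hne : (nhdsWithin T (Set.Ico 0 T)).NeBot := by
      rw [nhdsWithin_Ico_eq_nhdsLT hTpos]
      exact nhdsLT_neBot T
    have htend : Filter.Tendsto u (nhdsWithin T (Set.Ico 0 T)) (nhds (u T)) :=
      ((ucont T hT0).continuousWithinAt).tendsto
    have hev : ∀ᶠ τ in nhdsWithin T (Set.Ico 0 T), u τ ∈ Set.Icc (0:ℝ) r := by
      apply eventually_nhdsWithin_of_forall
      intro τ hτ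
      have := hgood τ hτ.1 hτ.2
      exact ⟨this.1.le, this.2.le⟩
    exact (isClosed_Icc).mem_of_tendsto htend hev
  have hUT' : u T = 0 ∨ u T = r := by
    rcases hTB.2 with h | h
    · exact Or.inl (le_antisymm h hUT.1)
    · exact Or.inr (le_antisymm hUT.2 h)
  -- equilibrium value
  have hceq : u T ^ (L - 1) * (s - u T ^ L) = 0 := by
    rcases hUT' with h | h
    · rw [h, zero_pow (by omega), zero_mul]
    · rw [h, hrL]
      simp
  obtain ⟨K, hK⟩ := ode_lipschitz L hL s r hs hr0
  have heq : Set.EqOn u (fun _ => u T) (Set.Icc 0 T) := by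
    apply ODE_solution_unique_of_mem_Icc_left (v := fun _ x => x ^ (L - 1) * (s - x ^ L))
      (s := fun _ => Set.Icc (0 : ℝ) r) (fun _ _ => hK)
    · intro τ hτ
      exact (ucont τ hτ.1).continuousWithinAt
    · intro τ hτ
      exact (hode τ hτ.1.le).hasDerivWithinAt
    · intro τ hτ
      rcases eq_or_lt_of_le hτ.2 with h | h
      · rw [h]; exact hUT
      · have := hgood τ hτ.1.le h
        exact ⟨this.1.le, this.2.le⟩
    · exact continuousOn_const
    · intro τ hτ
      simpa [hceq] using (hasDerivWithinAt_const τ (Set.Iic τ) (u T))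
    · intro τ hτ
      exact hUT
    · rfl
  have h0 : u 0 = u T := heq ⟨le_refl 0, hTpos.le⟩
  rw [hu0] at h0
  rcases hUT' with h | h
  · rw [h] at h0; linarith
  · rw [h] at h0; linarith
end part4

/-- For s > 0, L ≥ 3, the ODE dū/dt = ū^{L−1}(s − ū^L), ū(0) = β, 0 < β^L < s, satisfies
t = (1/(s(2−L))) [ū^{2−L}(t) ₂F₁(1, 2/L − 1, 2/L; ū^L(t)/s) − β^{2−L} ₂F₁(1, 2/L − 1, 2/L; β^L/s)]. -/
theorem stmt12 (L : ℕ) (hL : 3 ≤ L) (s b : ℝ) (hs : 0 < s) (hb : 0 < b) (hbs : b ^ L < s)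
    (u : ℝ → ℝ) (hu0 : u 0 = b)
    (hode : ∀ t : ℝ, 0 ≤ t → HasDerivAt u (u t ^ (L - 1) * (s - u t ^ L)) t) :
    ∀ t : ℝ, 0 ≤ t →
      t = (1 / (s * (2 - (L : ℝ)))) *
        (u t ^ ((2 : ℝ) - L) * twoF1 1 (2 / L - 1) (2 / L) (u t ^ L / s)
          - b ^ ((2 : ℝ) - L) * twoF1 1 (2 / L - 1) (2 / L) (b ^ L / s)) := by
  have hinv := invariance L hL s b hs hb hbs u hu0 hode
  intro t ht
  have key : ∀ τ ∈ Set.Icc (0 : ℝ) t, Gfun L s (u τ) = τ + Gfun L s b := by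
    apply eq_of_has_deriv_right_eq (f' := fun _ => (1 : ℝ))
    · intro τ hτ
      have hτ0 : 0 ≤ τ := hτ.1
      obtain ⟨hpos, hlt⟩ := hinv τ hτ0
      have hG := hasDerivAt_Gfun hL hs hpos hlt
      have hcomp := HasDerivAt.comp τ hG (hode τ hτ0)
      have hprod : (u τ ^ (L - 1) * (s - u τ ^ L))⁻¹ * (u τ ^ (L - 1) * (s - u τ ^ L)) = 1 := by
        apply inv_mul_cancel₀
        have h1 : (0:ℝ) < u τ ^ (L - 1) := by positivity
        have h2 : (0:ℝ) < s - u τ ^ L := by linarith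
        positivity
      rw [hprod] at hcomp
      exact hcomp.hasDerivWithinAt
    · intro τ hτ
      exact ((hasDerivAt_id τ).add_const (Gfun L s b)).hasDerivWithinAt
    · intro τ hτ
      obtain ⟨hpos, hlt⟩ := hinv τ hτ.1
      exact ((hasDerivAt_Gfun hL hs hpos hlt).comp τ (hode τ hτ.1)).continuousAt.continuousWithinAt
    · exact (continuous_id.add continuous_const).continuousOn
    · rw [hu0]; simp
  have hkey := key t ⟨ht, le_rfl⟩
  obtain ⟨hpos, hlt⟩ := hinv t ht
  rw [mul_sub, Gfun_eq hL hs hpos, Gfun_eq hL hs hb]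
  linarith
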